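/- Let (G, Λ) with Λ = (λ_x : x ∈ X/G) be a rack folder. Define a binary operation * on X by letting, for y ∈ xG with x ∈ X/G, the left translation be L_y = g⁻¹ λ_x g where g ∈ G satisfies xg = y. Then (X,*) is a rack, L_x = λ_x for every x ∈ X/G, and Lmlt(X,*) equals the subgroup of G generated by the union over x ∈ X/G of the conjugacy classes λ_x^G = { g⁻¹ λ_x g : g ∈ G }; in particular Lmlt(X,*) ≤ G. -/

import Mathlib

/-- A rack: a binary operation with bijective left translations satisfying the left
self-distributive law. -/
structure RackStr (X : Type*) where
  op : X → X → X
  bij : ∀ x, Function.Bijective (op x)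
  self_distrib : ∀ x y z, op x (op y z) = op (op x y) (op x z)

/-- A quandle: an idempotent rack. -/
structure QuandleStr (X : Type*) extends RackStr X where
  idem : ∀ x, op x x = x

namespace RackStr

variable {X : Type*}

/-- The left translation `L_x : y ↦ x * y`, as a permutation of `X`. -/
noncomputable def L (Q : RackStr X) (x : X) : Equiv.Perm X :=
  Equiv.ofBijective (Q.op x) (Q.bij x)

/-- The left multiplication group `Lmlt(X,*) = ⟨L_x : x ∈ X⟩ ≤ S_X`. -/
noncomputable def lmlt (Q : RackStr X) : Subgroup (Equiv.Perm X) :=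
  Subgroup.closure (Set.range Q.L)

end RackStr

/-- `R` is a complete set of representatives of the orbits of `G ≤ S_X` on `X`:
every `y ∈ X` lies in the orbit of a unique element of `R`. -/
def IsTransversal {X : Type*} (G : Subgroup (Equiv.Perm X)) (R : Set X) : Prop :=
  ∀ y : X, ∃! x : X, x ∈ R ∧ ∃ g ∈ G, g • y = x

/-- The stabilizer `G_x` of `x` in `G`, as a subgroup of `S_X`. -/
def stabIn {X : Type*} (G : Subgroup (Equiv.Perm X)) (x : X) : Subgroup (Equiv.Perm X) :=
  G ⊓ MulAction.stabilizer (Equiv.Perm X) x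

/-- The centralizer `C_G(G_x)` of the stabilizer `G_x` in `G`, as a subgroup of `S_X`. -/
def cgStab {X : Type*} (G : Subgroup (Equiv.Perm X)) (x : X) : Subgroup (Equiv.Perm X) :=
  G ⊓ Subgroup.centralizer (stabIn G x : Set (Equiv.Perm X))

/-- The center `Z(G_x)` of the stabilizer `G_x`, as a subgroup of `S_X`. -/
def zStab {X : Type*} (G : Subgroup (Equiv.Perm X)) (x : X) : Subgroup (Equiv.Perm X) :=
  stabIn G x ⊓ Subgroup.centralizer (stabIn G x : Set (Equiv.Perm X))

/-- The conjugacy class `a^G = { g⁻¹ a g : g ∈ G }` of `a` under `G`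
(written in left-action convention). -/
def conjClassOf {X : Type*} (G : Subgroup (Equiv.Perm X)) (a : Equiv.Perm X) :
    Set (Equiv.Perm X) :=
  {h | ∃ g ∈ G, h = g * a * g⁻¹}

/-- Proposition `Pr:Folder`(i): if `(G, Λ)` is a rack folder and `*` is the
operation on `X` whose left translations are `L_{g•x} = g * λ_x * g⁻¹` (`x ∈ R`, `g ∈ G`),
then `(X,*)` is a rack, `L_x = λ_x` for every `x ∈ R`, and
`Lmlt(X,*) = ⟨⋃_{x ∈ R} λ_x^G⟩ ≤ G`. -/
theorem rack_folder_gives_rack {X : Type*} (G : Subgroup (Equiv.Perm X)) (R : Set X)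
    (hR : IsTransversal G R) (Λ : X → Equiv.Perm X) (hΛ : ∀ x ∈ R, Λ x ∈ cgStab G x)
    (op : X → X → X)
    (hop : ∀ x ∈ R, ∀ g ∈ G, ∀ z : X, op (g • x) z = (g * Λ x * g⁻¹) z) :
    (∀ y : X, Function.Bijective (op y)) ∧
    (∀ u v w : X, op u (op v w) = op (op u v) (op u w)) ∧
    (∀ x ∈ R, ∀ y : X, op x y = Λ x y) ∧
    Subgroup.closure {h : Equiv.Perm X | ∃ y : X, ⇑h = op y} =
      Subgroup.closure (⋃ x ∈ R, conjClassOf G (Λ x)) ∧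
    Subgroup.closure {h : Equiv.Perm X | ∃ y : X, ⇑h = op y} ≤ G := by
  have hΛG : ∀ x ∈ R, Λ x ∈ G := by
    intro x hx
    have h := hΛ x hx
    rw [cgStab, Subgroup.mem_inf] at h
    exact h.1
  have key : ∀ y : X, ∃ x ∈ R, ∃ g ∈ G, g • y = x ∧ op y = ⇑(g⁻¹ * Λ x * g) := by
    intro y
    obtain ⟨x, ⟨hxR, g, hg, hgy⟩, -⟩ := hR y
    refine ⟨x, hxR, g, hg, hgy, ?_⟩
    funext z
    have h1 : op (g⁻¹ • x) z = ⇑(g⁻¹ * Λ x * g⁻¹⁻¹) z := hop x hxR g⁻¹ (inv_mem hg) z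
    have h2 : g⁻¹ • x = y := by rw [← hgy, inv_smul_smul]
    rw [h2, inv_inv] at h1
    exact h1
  have bij : ∀ y : X, Function.Bijective (op y) := by
    intro y
    obtain ⟨x, hx, g, hg, hgy, hopy⟩ := key y
    rw [hopy]
    exact (g⁻¹ * Λ x * g).bijective
  have sd : ∀ u v w : X, op u (op v w) = op (op u v) (op u w) := by
    intro u v w
    obtain ⟨xu, hxu, gu, hgu, hguu, hopu⟩ := key u
    obtain ⟨xv, hxv, gv, hgv, hgvv, hopv⟩ := key v
    set h : Equiv.Perm X := gu⁻¹ * Λ xu * gu with hh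
    have hhG : h ∈ G := mul_mem (mul_mem (inv_mem hgu) (hΛG xu hxu)) hgu
    have hv : v = gv⁻¹ • xv := by rw [← hgvv, inv_smul_smul]
    have huv : op u v = (h * gv⁻¹) • xv := by
      rw [hopu, hv]
      simp [Equiv.Perm.smul_def, mul_smul]
    have h2 : ∀ z, op (op u v) z = ⇑((h * gv⁻¹) * Λ xv * (h * gv⁻¹)⁻¹) z := by
      intro z
      rw [huv]
      exact hop xv hxv (h * gv⁻¹) (mul_mem hhG (inv_mem hgv)) z
    rw [h2, hopu, hopv]
    simp [mul_inv_rev, inv_inv, Equiv.Perm.mul_apply, Equiv.Perm.inv_def]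
  have hset : {h : Equiv.Perm X | ∃ y : X, ⇑h = op y} = ⋃ x ∈ R, conjClassOf G (Λ x) := by
    ext p
    simp only [Set.mem_setOf_eq, Set.mem_iUnion, conjClassOf]
    constructor
    · rintro ⟨y, hy⟩
      obtain ⟨x, hx, g, hg, hgy, hopy⟩ := key y
      refine ⟨x, ⟨hx, g⁻¹, inv_mem hg, ?_⟩⟩
      rw [inv_inv]
      exact Equiv.coe_fn_injective (hy.trans hopy)
    · rintro ⟨x, ⟨hx, g, hg, rfl⟩⟩
      refine ⟨g • x, ?_⟩
      funext z
      exact (hop x hx g hg z).symm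
  have hG : ∀ p ∈ (⋃ x ∈ R, conjClassOf G (Λ x)), p ∈ G := by
    intro p hp
    simp only [Set.mem_iUnion, conjClassOf, Set.mem_setOf_eq] at hp
    obtain ⟨x, ⟨hx, g, hg, rfl⟩⟩ := hp
    exact mul_mem (mul_mem hg (hΛG x hx)) (inv_mem hg)
  refine ⟨bij, sd, ?_, ?_, ?_⟩
  · intro x hx y
    have := hop x hx 1 (one_mem G) y
    simpa using this
  · rw [hset]
  · rw [hset]
    exact (Subgroup.closure_le G).mpr hG
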